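/- If G is a connected cograph on at least two vertices, then the complement of G is disconnected; equivalently, G is the series composition of two non-empty graphs. -/

import Mathlib

variable {V : Type*}

/-- `{a,b,c,d}` induces a path `a - b - c - d` on four vertices in `G`. -/
def IsInducedP4 (G : SimpleGraph V) (a b c d : V) : Prop :=
  a ≠ b ∧ a ≠ c ∧ a ≠ d ∧ b ≠ c ∧ b ≠ d ∧ c ≠ d ∧
  G.Adj a b ∧ G.Adj b c ∧ G.Adj c d ∧ ¬ G.Adj a c ∧ ¬ G.Adj a d ∧ ¬ G.Adj b d

/-- `G` has no induced path on four vertices. -/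
def P4Free (G : SimpleGraph V) : Prop := ∀ a b c d : V, ¬ IsInducedP4 G a b c d

/-- `M` is a module of `G`: every vertex outside `M` is adjacent to all or none of `M`. -/
def IsModule (G : SimpleGraph V) (M : Set V) : Prop :=
  ∀ x ∉ M, (∀ v ∈ M, G.Adj x v) ∨ (∀ v ∈ M, ¬ G.Adj x v)

/-- `F` is an edge-deletion set of `G`: a set of edges whose removal makes `G` `P₄`-free. -/
def IsDelSet (G : SimpleGraph V) (F : Set (Sym2 V)) : Prop :=
  F ⊆ G.edgeSet ∧ P4Free (G.deleteEdges F)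

/-- `F` is an optimal (minimum-cardinality) edge-deletion set of `G`. -/
def IsOptDelSet (G : SimpleGraph V) (F : Set (Sym2 V)) : Prop :=
  IsDelSet G F ∧ ∀ F' : Set (Sym2 V), IsDelSet G F' → F.ncard ≤ F'.ncard

/-- `S` splits into two nonempty parts with no `G`-edges in between. -/
def SplitD (G : SimpleGraph V) (S : Set V) : Prop :=
  ∃ A B : Set V, A.Nonempty ∧ B.Nonempty ∧ Disjoint A B ∧ A ∪ B = S ∧
    ∀ a ∈ A, ∀ b ∈ B, ¬ G.Adj a b

lemma reach_stay {r : V → V → Prop} {A : Set V}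
    (h : ∀ c d, c ∈ A → r c d → d ∈ A) :
    ∀ {x y}, Relation.ReflTransGen r x y → x ∈ A → y ∈ A := by
  intro x y hxy
  induction hxy with
  | refl => exact id
  | tail _ hstep ih => exact fun hx => h _ _ (ih hx) hstep

lemma flip_pair {r : V → V → Prop} {P : V → Prop} :
    ∀ {w t}, Relation.ReflTransGen r w t → P w → ¬ P t →
      ∃ z y, r z y ∧ P z ∧ ¬ P y ∧ Relation.ReflTransGen r w z := by
  intro w t h
  induction h with
  | refl => exact fun h1 h2 => absurd h1 h2
  | @tail c d hwc hstep ih =>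
    intro hw hd
    by_cases hc : P c
    · exact ⟨c, d, hstep, hc, hd, hwc⟩
    · exact ih hw hc

lemma P4Free.compl {G : SimpleGraph V} (h : P4Free G) : P4Free Gᶜ := by
  rintro a b c d ⟨hab, hac, had, hbc, hbd, hcd, h1, h2, h3, h4, h5, h6⟩
  have gac : G.Adj a c := by
    by_contra hg; exact h4 ((G.compl_adj a c).mpr ⟨hac, hg⟩)
  have gad : G.Adj a d := by
    by_contra hg; exact h5 ((G.compl_adj a d).mpr ⟨had, hg⟩)
  have gbd : G.Adj b d := by
    by_contra hg; exact h6 ((G.compl_adj b d).mpr ⟨hbd, hg⟩)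
  exact h c a d b ⟨hac.symm, hcd, hbc.symm, had, hab, hbd.symm,
    gac.symm, gad, gbd.symm,
    ((G.compl_adj c d).mp h3).2,
    fun hg => ((G.compl_adj b c).mp h2).2 hg.symm,
    ((G.compl_adj a b).mp h1).2⟩

lemma step_lemma {G : SimpleGraph V} (h4 : P4Free G) {v : V} {S' : Set V}
    (hv : v ∉ S') (hS'ne : S'.Nonempty) (hsplit : SplitD Gᶜ S') :
    SplitD G (insert v S') ∨ SplitD Gᶜ (insert v S') := by
  classical
  set rel : V → V → Prop := fun a b => a ∈ S' ∧ b ∈ S' ∧ Gᶜ.Adj a b with hrel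
  set reach : V → V → Prop := Relation.ReflTransGen rel with hreach
  have hrelsymm : Symmetric rel := fun a b ⟨p, q, r⟩ => ⟨q, p, r.symm⟩
  have hreachsymm : Symmetric reach := by
    haveI : Std.Symm rel := ⟨fun a b h => hrelsymm h⟩
    exact fun a b h => (Relation.ReflTransGen.symmetric (r := rel)).symm a b h
  have hmem : ∀ {x y}, reach x y → x ∈ S' → y ∈ S' :=
    fun {x y} h hx => reach_stay (A := S') (fun c d _ hr => hr.2.1) h hx
  by_cases hM : ∀ x ∈ S', G.Adj v x
  · right
    refine ⟨{v}, S', ⟨v, rfl⟩, hS'ne, ?_, ?_, ?_⟩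
    · exact Set.disjoint_singleton_left.mpr hv
    · exact (Set.insert_eq v S').symm
    · rintro a rfl b hb hadj
      exact ((G.compl_adj a b).mp hadj).2 (hM b hb)
  by_cases hN : ∀ x ∈ S', ¬ G.Adj v x
  · left
    refine ⟨{v}, S', ⟨v, rfl⟩, hS'ne, ?_, ?_, ?_⟩
    · exact Set.disjoint_singleton_left.mpr hv
    · exact (Set.insert_eq v S').symm
    · rintro a rfl b hb hadj
      exact hN b hb hadj
  push_neg at hM hN
  obtain ⟨w, hw, hvw⟩ := hN
  by_cases hcomp : ∃ x ∈ S', ∀ y ∈ S', reach x y → G.Adj v y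
  · right
    obtain ⟨x, hx, hall⟩ := hcomp
    refine ⟨{y | y ∈ S' ∧ reach x y}, insert v {y | y ∈ S' ∧ ¬ reach x y},
      ⟨x, hx, Relation.ReflTransGen.refl⟩, ⟨v, Set.mem_insert _ _⟩, ?_, ?_, ?_⟩
    · rw [Set.disjoint_left]
      rintro a ⟨ha1, ha2⟩ hb
      rcases hb with rfl | ⟨_, hb2⟩
      · exact hv ha1
      · exact hb2 ha2
    · ext y
      constructor
      · rintro (⟨hy, _⟩ | hy)
        · exact Set.mem_insert_of_mem _ hy
        · rcases hy with rfl | ⟨hy, _⟩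
          · exact Set.mem_insert _ _
          · exact Set.mem_insert_of_mem _ hy
      · rintro (rfl | hy)
        · exact Or.inr (Set.mem_insert _ _)
        · by_cases hr : reach x y
          · exact Or.inl ⟨hy, hr⟩
          · exact Or.inr (Set.mem_insert_of_mem _ ⟨hy, hr⟩)
    · rintro a ⟨ha1, ha2⟩ b hb hadj
      rcases hb with rfl | ⟨hb1, hb2⟩
      · exact ((G.compl_adj a b).mp hadj).2 (hall a ha1 ha2).symm
      · exact hb2 (ha2.tail ⟨ha1, hb1, hadj⟩)
  · exfalso
    push_neg at hcomp
    -- every component contains a non-neighbor of v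
    obtain ⟨A', B', hA'ne, hB'ne, hdisj', hun', hcross'⟩ := hsplit
    obtain ⟨p, hp⟩ := hA'ne
    obtain ⟨q, hq⟩ := hB'ne
    have hpS : p ∈ S' := hun' ▸ Or.inl hp
    have hqS : q ∈ S' := hun' ▸ Or.inr hq
    have hstayA' : ∀ {x y}, reach x y → x ∈ A' → y ∈ A' := by
      intro x y h hx
      refine reach_stay (A := A') ?_ h hx
      rintro c d hc ⟨hcS, hdS, hadj⟩
      rcases (hun' ▸ hdS : d ∈ A' ∪ B') with hd | hd
      · exact hd
      · exact absurd hadj (hcross' c hc d hd)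
    have hpq : ¬ reach p q := fun h => (Set.disjoint_left.mp hdisj' (hstayA' h hp)) hq
    -- a vertex s not reachable from w
    obtain ⟨s, hsS, hws⟩ : ∃ s ∈ S', ¬ reach w s := by
      by_cases hwp : reach w p
      · exact ⟨q, hqS, fun h => hpq ((hreachsymm hwp).trans h)⟩
      · exact ⟨p, hpS, hwp⟩
    obtain ⟨u, huS, hsu, hvu⟩ := hcomp s hsS
    have hwu : ¬ reach w u := fun h => hws (h.trans (hreachsymm hsu))
    obtain ⟨t, htS, hwt, hvt⟩ := hcomp w hw
    obtain ⟨z, y, hzy, hvz, hvy, hwz⟩ :=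
      flip_pair (P := fun y => G.Adj v y) hwt hvw hvt
    have hzS : z ∈ S' := hzy.1
    have hyS : y ∈ S' := hzy.2.1
    have hwy : reach w y := hwz.tail hzy
    have hzu : ¬ reach z u := fun h => hwu (hwz.trans h)
    have hyu : ¬ reach y u := fun h => hwu (hwy.trans h)
    have hne_zu : z ≠ u := fun e => hzu (e ▸ Relation.ReflTransGen.refl)
    have hne_yu : y ≠ u := fun e => hyu (e ▸ Relation.ReflTransGen.refl)
    have gzu : G.Adj z u := by
      by_contra hg
      exact hzu (Relation.ReflTransGen.single ⟨hzS, huS, (G.compl_adj z u).mpr ⟨hne_zu, hg⟩⟩)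
    have gyu : G.Adj y u := by
      by_contra hg
      exact hyu (Relation.ReflTransGen.single ⟨hyS, huS, (G.compl_adj y u).mpr ⟨hne_yu, hg⟩⟩)
    exact h4 v z u y ⟨fun e => hv (e ▸ hzS), fun e => hv (e ▸ huS), fun e => hv (e ▸ hyS),
      hne_zu, hzy.2.2.ne, fun e => hne_yu e.symm,
      hvz, gzu, gyu.symm, hvu, hvy, ((G.compl_adj z y).mp hzy.2.2).2⟩

lemma key_split [Fintype V] :
    ∀ (n : ℕ) (G : SimpleGraph V), P4Free G → ∀ S : Set V, S.ncard = n → 2 ≤ n →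
      SplitD G S ∨ SplitD Gᶜ S := by
  intro n
  induction n using Nat.strong_induction_on with
  | _ n ih =>
    intro G h4 S hS hn
    rcases eq_or_lt_of_le hn with h2 | h3
    · obtain ⟨x, y, hxy, rfl⟩ := Set.ncard_eq_two.mp (hS.trans h2.symm)
      by_cases hadj : G.Adj x y
      · right
        refine ⟨{x}, {y}, ⟨x, rfl⟩, ⟨y, rfl⟩, Set.disjoint_singleton.mpr hxy, rfl, ?_⟩
        rintro a rfl b rfl h
        exact ((G.compl_adj a b).mp h).2 hadj
      · left
        refine ⟨{x}, {y}, ⟨x, rfl⟩, ⟨y, rfl⟩, Set.disjoint_singleton.mpr hxy, rfl, ?_⟩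
        rintro a rfl b rfl h
        exact hadj h
    · obtain ⟨v, hv⟩ : S.Nonempty := Set.nonempty_of_ncard_ne_zero (by omega)
      have hvS' : v ∉ S \ {v} := fun h => h.2 rfl
      have hcard : (S \ {v}).ncard = n - 1 := by
        rw [Set.ncard_diff_singleton_of_mem hv, hS]
      have hS'ne : (S \ {v}).Nonempty :=
        Set.nonempty_of_ncard_ne_zero (by omega)
      have hins : insert v (S \ {v}) = S := by
        rw [Set.insert_diff_singleton, Set.insert_eq_of_mem hv]
      rcases ih (n - 1) (by omega) G h4 (S \ {v}) hcard (by omega) with hG | hGc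
      · have := step_lemma (G := Gᶜ) h4.compl hvS' hS'ne
          (by rw [compl_compl]; exact hG)
        rw [compl_compl, hins] at this
        exact this.symm
      · have := step_lemma h4 hvS' hS'ne hGc
        rw [hins] at this
        exact this

theorem stmt10 [Fintype V] (G : SimpleGraph V) (hconn : G.Connected)
    (hcog : P4Free G) (hcard : 2 ≤ Fintype.card V) :
    ¬ (Gᶜ).Connected ∧
      ∃ A B : Set V, A.Nonempty ∧ B.Nonempty ∧ Disjoint A B ∧ A ∪ B = Set.univ ∧
        ∀ a ∈ A, ∀ b ∈ B, G.Adj a b := by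
  classical
  have hncard : (Set.univ : Set V).ncard = Fintype.card V := by
    rw [Set.ncard_univ, Nat.card_eq_fintype_card]
  rcases key_split (Fintype.card V) G hcog Set.univ hncard hcard with hG | hGc
  · exfalso
    obtain ⟨A, B, hAne, hBne, hdisj, hun, hcross⟩ := hG
    obtain ⟨a, ha⟩ := hAne
    obtain ⟨b, hb⟩ := hBne
    have hreach := (SimpleGraph.reachable_iff_reflTransGen a b).mp
      (hconn.preconnected a b)
    have hbA : b ∈ A := by
      refine reach_stay (A := A) ?_ hreach ha
      intro c d hc hcd
      rcases (hun ▸ (Set.mem_univ d) : d ∈ A ∪ B) with hd | hd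
      · exact hd
      · exact absurd hcd (hcross c hc d hd)
    exact (Set.disjoint_left.mp hdisj hbA) hb
  · obtain ⟨A, B, hAne, hBne, hdisj, hun, hcross⟩ := hGc
    have hadj : ∀ a ∈ A, ∀ b ∈ B, G.Adj a b := by
      intro a ha b hb
      by_contra hg
      exact hcross a ha b hb ((G.compl_adj a b).mpr
        ⟨fun e => (Set.disjoint_left.mp hdisj ha) (e ▸ hb), hg⟩)
    constructor
    · intro hc
      obtain ⟨a, ha⟩ := hAne
      obtain ⟨b, hb⟩ := hBne
      have hreach := (SimpleGraph.reachable_iff_reflTransGen a b).mp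
        (hc.preconnected a b)
      have hbA : b ∈ A := by
        refine reach_stay (A := A) ?_ hreach ha
        intro c d hc' hcd
        rcases (hun ▸ (Set.mem_univ d) : d ∈ A ∪ B) with hd | hd
        · exact hd
        · exact absurd hcd (hcross c hc' d hd)
      exact (Set.disjoint_left.mp hdisj hbA) hb
    · exact ⟨A, B, hAne, hBne, hdisj, hun, hadj⟩
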